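/- Let (K, v) be an ordered valued field and P ∈ K[X] a polynomial of degree d ≥ 1 whose leading coefficient P^[d] is > 0. Let a ∈ K be such that P^[k](a) ≥ 0 for all k = 0,…,d−1. Then for every x ∈ K with x > a, writing t = x − a, one has v(P(x)) = min( v(P(a)), v(P^[1](a)) + v(t), v(P^[2](a)) + 2·v(t), …, v(P^[d-1](a)) + (d−1)·v(t), v(P^[d]) + d·v(t) ). -/

import Mathlib

/-- An ordered valuation on a linearly ordered field `K`: an additively-written valuation
`v : K → Γ ∪ {∞}` compatible with the order. -/
def IsOrderedValuation {K Γ : Type*} [Field K] [LinearOrder K] [IsStrictOrderedRing K]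
    [AddCommGroup Γ] [LinearOrder Γ] [IsOrderedAddMonoid Γ] (v : K → WithTop Γ) : Prop :=
  (∀ x, v x = ⊤ ↔ x = 0) ∧
  (∀ x y, v (x * y) = v x + v y) ∧
  (∀ x y, min (v x) (v y) ≤ v (x + y)) ∧
  (∀ x y : K, 0 ≤ x → x ≤ y → v y ≤ v x)


section AuxOrderedValuation
variable {K Γ : Type*} [Field K] [LinearOrder K] [IsStrictOrderedRing K]
  [AddCommGroup Γ] [LinearOrder Γ] [IsOrderedAddMonoid Γ]
  {v : K → WithTop Γ}

lemma ov_one (hv : IsOrderedValuation v) : v 1 = 0 := by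
  have h : v 1 = v 1 + v 1 := by rw [← hv.2.1]; norm_num
  have hne : v 1 ≠ ⊤ := by simp [hv.1]
  obtain ⟨b, hb⟩ := WithTop.ne_top_iff_exists.mp hne
  rw [← hb] at h ⊢
  norm_cast at h ⊢
  exact left_eq_add.mp h

lemma ov_pow (hv : IsOrderedValuation v) (t : K) (k : ℕ) :
    v (t ^ k) = k • v t := by
  induction k with
  | zero => simpa using ov_one hv
  | succ n ih => rw [pow_succ, hv.2.1, ih, succ_nsmul]

lemma ov_sum (hv : IsOrderedValuation v)
    {ι : Type*} (s : Finset ι) (hs : s.Nonempty) (f : ι → K)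
    (hf : ∀ i ∈ s, 0 ≤ f i) :
    v (∑ i ∈ s, f i) = s.inf' hs (fun i => v (f i)) := by
  apply le_antisymm
  · rw [Finset.le_inf'_iff]
    intro i hi
    exact hv.2.2.2 _ _ (hf i hi) (Finset.single_le_sum hf hi)
  · induction hs using Finset.Nonempty.cons_induction with
    | singleton i => simp
    | cons i s his hs ih =>
      rw [Finset.sum_cons, Finset.inf'_cons hs]
      refine le_trans ?_ (hv.2.2.1 _ _)
      exact min_le_min le_rfl (ih (fun j hj => hf j (Finset.mem_cons_of_mem hj)))

end AuxOrderedValuation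

/-- **Valuation via the usual Taylor formula.**
If `P` has degree `d ≥ 1`, positive leading coefficient, and all Hasse derivatives
`P^[k](a) ≥ 0` for `k < d`, then for `x > a`, writing `t = x − a`,
`v(P(x)) = min_{0 ≤ k ≤ d} ( v(P^[k](a)) + k·v(t) )`
(the `k = d` term being `v(P^[d]) + d·v(t)` with `P^[d]` the leading coefficient). -/
theorem valuation_taylor {K Γ : Type*} [Field K] [LinearOrder K] [IsStrictOrderedRing K]
    [AddCommGroup Γ] [LinearOrder Γ] [IsOrderedAddMonoid Γ] (v : K → WithTop Γ) (hv : IsOrderedValuation v)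
    (P : Polynomial K) (d : ℕ) (hd : 1 ≤ d) (hdeg : P.natDegree = d)
    (hlead : 0 < P.leadingCoeff)
    (a : K) (ha : ∀ k, k < d → 0 ≤ (Polynomial.hasseDeriv k P).eval a)
    (x : K) (hx : a < x) :
    v (P.eval x) =
      (Finset.range (d + 1)).inf' Finset.nonempty_range_add_one
        (fun k => v ((Polynomial.hasseDeriv k P).eval a) + k • v (x - a)) := by
  set t := x - a with ht
  have htpos : 0 < t := sub_pos.mpr hx
  have hdtop : (Polynomial.hasseDeriv d P).eval a = P.leadingCoeff := by
    have h0 : (Polynomial.hasseDeriv d P).natDegree = 0 := by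
      have := Polynomial.natDegree_hasseDeriv_le P d
      omega
    rw [Polynomial.eq_C_of_natDegree_eq_zero h0, Polynomial.eval_C,
      Polynomial.hasseDeriv_coeff]
    simp [Polynomial.leadingCoeff, hdeg]
  have hanneg : ∀ k ∈ Finset.range (d + 1),
      0 ≤ (Polynomial.hasseDeriv k P).eval a * t ^ k := by
    intro k hk
    rw [Finset.mem_range] at hk
    rcases lt_or_eq_of_le (Nat.lt_succ_iff.mp hk) with h | h
    · exact mul_nonneg (ha k h) (pow_nonneg htpos.le k)
    · subst h; rw [hdtop]; exact mul_nonneg hlead.le (pow_nonneg htpos.le k)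
  have htaylor : P.eval x = ∑ k ∈ Finset.range (d + 1),
      (Polynomial.hasseDeriv k P).eval a * t ^ k := by
    conv_lhs => rw [← Polynomial.taylor_eval_sub a P x]
    rw [Polynomial.eval_eq_sum_range, Polynomial.natDegree_taylor, hdeg]
    exact Finset.sum_congr rfl fun k _ => by rw [Polynomial.taylor_coeff]
  rw [htaylor, ov_sum hv _ Finset.nonempty_range_add_one _ hanneg]
  exact Finset.inf'_congr _ rfl fun k _ => by rw [hv.2.1, ov_pow hv]
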